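/- (Necessity of ZBFs, Proposition 3) Let C = {x : h(x) ≥ 0} be nonempty and compact with h: ℝⁿ → ℝ continuously differentiable, and suppose C is forward invariant for ẋ = f(x) with f locally Lipschitz. Then there exists a class K function α̂ (defined on [0,∞)) such that L_f h(x) ≥ −α̂(h(x)) for all x ∈ C, i.e., h restricted to C is a zeroing barrier function. -/

import Mathlib

open Set Metric MeasureTheory intervalIntegral Filter Topology NNReal

/-- Local solution of an autonomous ODE with locally Lipschitz right-hand side. -/
lemma exists_flow_of_locallyLipschitz {E : Type*} [NormedAddCommGroup E] [NormedSpace ℝ E]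
    [CompleteSpace E] {v : E → E} (hv : LocallyLipschitz v) (t₀ : ℝ) (x₀ : E) :
    ∃ f : ℝ → E, f t₀ = x₀ ∧
      ∃ ε > (0 : ℝ), ∀ t ∈ Ioo (t₀ - ε) (t₀ + ε), HasDerivAt f (v (f t)) t := by
  obtain ⟨L, s, hs, hlip⟩ := hv x₀
  obtain ⟨R₁, hR₁ : 0 < R₁, hball⟩ := Metric.mem_nhds_iff.mp hs
  obtain ⟨R₂, hR₂ : 0 < R₂, hbdd⟩ :=
    Metric.continuousAt_iff.mp (hv.continuous.norm.continuousAt (x := x₀)) 1 zero_lt_one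
  have hbdd' : ∀ x ∈ Metric.ball x₀ R₂, ‖v x‖ ≤ 1 + ‖v x₀‖ := fun _ hx =>
    sub_le_iff_le_add.mp <| le_of_lt <| lt_of_abs_lt <| Real.dist_eq _ _ ▸ hbdd hx
  set ε := min R₁ R₂ / 2 / (1 + ‖v x₀‖) with hε
  have hε0 : 0 < ε := hε ▸ div_pos (half_pos <| lt_min hR₁ hR₂)
    (add_pos_of_pos_of_nonneg zero_lt_one (norm_nonneg _))
  have hpl : IsPicardLindelof (fun _ : ℝ => v) (tmin := t₀ - ε) (tmax := t₀ + ε)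
      ⟨t₀, by simp [hε0.le]⟩ x₀ ⟨min R₁ R₂ / 2, by positivity⟩ 0 ⟨1 + ‖v x₀‖, by positivity⟩ L :=
    { lipschitzOnWith := fun _ _ => hlip.mono <|
        (closedBall_subset_ball <| half_lt_self <| lt_min hR₁ hR₂).trans <|
        (Metric.ball_subset_ball <| min_le_left _ _).trans hball
      continuousOn := fun _ _ => continuousOn_const
      norm_le := fun _ _ x hx => hbdd' x <| mem_of_mem_of_subset hx <|
        (closedBall_subset_ball <| half_lt_self <| lt_min hR₁ hR₂).trans <|
        (Metric.ball_subset_ball <| min_le_right _ _).trans (subset_refl _)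
      mul_max_le := by
        change (1 + ‖v x₀‖) * max (t₀ + ε - t₀) (t₀ - (t₀ - ε)) ≤ min R₁ R₂ / 2 - 0
        rw [sub_zero, add_sub_cancel_left, sub_sub_cancel, max_self, hε, mul_div_left_comm, div_self, mul_one]
        exact ne_of_gt <| add_pos_of_pos_of_nonneg zero_lt_one <| norm_nonneg _ }
  obtain ⟨f, hf1, hf2⟩ := hpl.exists_eq_forall_mem_Icc_hasDerivWithinAt₀
  exact ⟨f, hf1, ε, hε0, fun t ht =>
    (hf2 t (Ioo_subset_Icc_self ht)).hasDerivAt (Icc_mem_nhds ht.1 ht.2)⟩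

/-- If `g 0 = 0`, `g ≥ 0` on `[0, T]` and `g` is differentiable at `0`, its derivative
is nonnegative. -/
lemma deriv_nonneg_of_nonneg_right {g : ℝ → ℝ} {d T : ℝ} (hT : 0 < T)
    (hd : HasDerivAt g d 0) (h0 : g 0 = 0) (hpos : ∀ t ∈ Icc (0:ℝ) T, 0 ≤ g t) : 0 ≤ d := by
  have hs : Tendsto (slope g 0) (𝓝[≠] 0) (𝓝 d) := hasDerivAt_iff_tendsto_slope.mp hd
  have hs' : Tendsto (slope g 0) (𝓝[>] 0) (𝓝 d) :=
    hs.mono_left (nhdsWithin_mono _ (fun t ht => ne_of_gt ht))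
  refine ge_of_tendsto hs' ?_
  filter_upwards [Ioo_mem_nhdsGT_of_mem (Set.mem_Ico.mpr ⟨le_rfl, hT⟩)] with t ht
  have : slope g 0 t = g t / t := by
    rw [slope_def_field, h0, sub_zero, sub_zero]
  rw [this]
  exact div_nonneg (hpos t ⟨ht.1.le, ht.2.le⟩) ht.1.le

theorem stmt12 (n : ℕ) (f : (Fin n → ℝ) → (Fin n → ℝ)) (hf : LocallyLipschitz f)
    (h : (Fin n → ℝ) → ℝ) (hh : ContDiff ℝ 1 h)
    (hne : {x | 0 ≤ h x}.Nonempty) (hcomp : IsCompact {x | 0 ≤ h x})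
    (hinv : ∀ (x : ℝ → Fin n → ℝ) (t₀ T : ℝ),
      (∀ t ∈ Set.Icc t₀ T, HasDerivAt x (f (x t)) t) →
      0 ≤ h (x t₀) → ∀ t ∈ Set.Icc t₀ T, 0 ≤ h (x t)) :
    ∃ αhat : ℝ → ℝ,
      ContinuousOn αhat (Set.Ici 0) ∧ StrictMonoOn αhat (Set.Ici 0) ∧ αhat 0 = 0 ∧
      ∀ x, 0 ≤ h x → fderiv ℝ h x (f x) ≥ -αhat (h x) := by
  classical
  set C : Set (Fin n → ℝ) := {x | 0 ≤ h x} with hC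
  -- the Lie derivative
  set L : (Fin n → ℝ) → ℝ := fun x => fderiv ℝ h x (f x) with hLdef
  have hcont : Continuous h := hh.continuous
  have hLcont : Continuous L := by
    have h1 : Continuous fun x => fderiv ℝ h x := (hh.fderiv_right (m := 0) le_rfl).continuous
    exact h1.clm_apply hf.continuous
  set ψ : (Fin n → ℝ) → ℝ := fun x => max (-(L x)) 0 with hψdef
  have hψcont : Continuous ψ := (hLcont.neg).max continuous_const
  have hψnonneg : ∀ x, 0 ≤ ψ x := fun x => le_max_right _ _
  -- Step 1: on the boundary the Lie derivative is nonnegative (Nagumo necessity)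
  have hbdry : ∀ x, h x = 0 → 0 ≤ L x := by
    intro x hx
    obtain ⟨γ, hγ0, ε, hε, hγ⟩ := exists_flow_of_locallyLipschitz hf 0 x
    have hder : ∀ t ∈ Icc (0:ℝ) (ε/2), HasDerivAt γ (f (γ t)) t := by
      intro t ht
      exact hγ t ⟨by linarith [ht.1], by linarith [ht.2]⟩
    have hpos := hinv γ 0 (ε/2) hder (by rw [hγ0, hx])
    -- g = h ∘ γ
    have hhd : HasFDerivAt h (fderiv ℝ h x) x := (hh.differentiable (by norm_num) x).hasFDerivAt
    have hγd : HasDerivAt γ (f x) 0 := by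
      have := hder 0 ⟨le_rfl, by linarith⟩
      rwa [hγ0] at this
    have hhd' : HasFDerivAt h (fderiv ℝ h x) (γ 0) := hγ0 ▸ hhd
    have hcomp' : HasDerivAt (h ∘ γ) (fderiv ℝ h x (f x)) 0 := hhd'.comp_hasDerivAt 0 hγd
    exact deriv_nonneg_of_nonneg_right (by linarith : (0:ℝ) < ε/2) hcomp'
      (by simp [Function.comp, hγ0, hx]) (fun t ht => hpos t ht)
  have hψbdry : ∀ x, h x = 0 → ψ x = 0 := by
    intro x hx
    have := hbdry x hx
    simp [hψdef, max_eq_right, neg_nonpos.mpr this]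
  -- Step 2: smallness of ψ near the boundary
  have hsmall : ∀ ε > (0:ℝ), ∃ δ > (0:ℝ), ∀ x ∈ C, h x ≤ δ → ψ x < ε := by
    intro ε hεpos
    by_contra hcon
    push_neg at hcon
    set K : ℕ → Set (Fin n → ℝ) := fun k => {x ∈ C | h x ≤ 1/(k+1) ∧ ε ≤ ψ x} with hK
    have hKne : ∀ k, (K k).Nonempty := by
      intro k
      obtain ⟨x, hxC, hxh, hxψ⟩ := hcon (1/(k+1)) (by positivity)
      exact ⟨x, hxC, hxh, hxψ⟩
    have hKclosed : ∀ k, IsClosed (K k) := by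
      intro k
      have : K k = C ∩ (h ⁻¹' Iic (1/(k+1))) ∩ (ψ ⁻¹' Ici ε) := by
        ext x; simp [hK, hC, and_assoc]
      rw [this]
      exact ((hcomp.isClosed.inter (isClosed_Iic.preimage hcont)).inter
        (isClosed_Ici.preimage hψcont))
    have hKcomp : IsCompact (K 0) :=
      hcomp.of_isClosed_subset (hKclosed 0) (fun x hx => hx.1)
    have hKsub : ∀ k, K (k+1) ⊆ K k := by
      intro k x hx
      refine ⟨hx.1, le_trans hx.2.1 ?_, hx.2.2⟩
      apply one_div_le_one_div_of_le (by positivity)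
      push_cast; linarith
    obtain ⟨x, hx⟩ := IsCompact.nonempty_iInter_of_sequence_nonempty_isCompact_isClosed K
      hKsub hKne hKcomp hKclosed
    simp only [Set.mem_iInter] at hx
    have hx0 : h x ≤ 0 := by
      by_contra hpos'
      push_neg at hpos'
      obtain ⟨k, hk⟩ := exists_nat_one_div_lt hpos'
      exact absurd ((hx k).2.1) (not_le.mpr hk)
    have hxeq : h x = 0 := le_antisymm hx0 ((hx 0).1)
    have := hψbdry x hxeq
    have := (hx 0).2.2
    linarith
  -- Step 3: the monotone envelope φ
  set φ : ℝ → ℝ := fun r => sSup (insert 0 (ψ '' (C ∩ {x | h x ≤ r}))) with hφdef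
  have hbdd : BddAbove (ψ '' C) := (hcomp.image hψcont).bddAbove
  have hbdd' : ∀ r, BddAbove (insert 0 (ψ '' (C ∩ {x | h x ≤ r}))) := by
    intro r
    exact (hbdd.mono (Set.image_mono (Set.inter_subset_left))).insert 0
  have hφmono : Monotone φ := by
    intro r₁ r₂ hr
    apply csSup_le_csSup (hbdd' r₂) (Set.insert_nonempty _ _)
    apply Set.insert_subset_insert
    exact Set.image_mono (Set.inter_subset_inter_right _ (fun x hx => le_trans hx hr))
  have hφnonneg : ∀ r, 0 ≤ φ r := fun r => le_csSup (hbdd' r) (Set.mem_insert _ _)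
  have hφge : ∀ x ∈ C, ∀ r, h x ≤ r → ψ x ≤ φ r := by
    intro x hx r hr
    exact le_csSup (hbdd' r) (Set.mem_insert_of_mem _ ⟨x, ⟨hx, hr⟩, rfl⟩)
  have hφ0 : φ 0 = 0 := by
    refine le_antisymm ?_ (hφnonneg 0)
    apply csSup_le (Set.insert_nonempty _ _)
    rintro y (rfl | ⟨x, ⟨hxC, hxle⟩, rfl⟩)
    · exact le_rfl
    · exact le_of_eq (hψbdry x (le_antisymm hxle hxC))
  have hφsmall : ∀ ε > (0:ℝ), ∃ δ > (0:ℝ), ∀ r ≤ δ, φ r ≤ ε := by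
    intro ε hε
    obtain ⟨δ, hδ, hδ'⟩ := hsmall ε hε
    refine ⟨δ, hδ, fun r hr => ?_⟩
    apply csSup_le (Set.insert_nonempty _ _)
    rintro y (rfl | ⟨x, ⟨hxC, hxle⟩, rfl⟩)
    · exact hε.le
    · exact (hδ' x hxC (le_trans hxle hr)).le
  -- integrability of φ
  have hφint : ∀ a b : ℝ, IntervalIntegrable φ volume a b :=
    fun a b => (hφmono.monotoneOn _).intervalIntegrable
  -- Step 4: the class K function
  set G : ℝ → ℝ := fun r => ∫ u in (1:ℝ)..2, φ (r * u) with hGdef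
  have hGint : ∀ r : ℝ, 0 ≤ r → IntervalIntegrable (fun u => φ (r * u)) volume 1 2 := by
    intro r hr
    apply MonotoneOn.intervalIntegrable
    intro u hu v hv huv
    exact hφmono (mul_le_mul_of_nonneg_left huv hr)
  have hGmono : ∀ r₁ r₂ : ℝ, 0 ≤ r₁ → r₁ ≤ r₂ → G r₁ ≤ G r₂ := by
    intro r₁ r₂ h₁ h₁₂
    apply integral_mono_on (by norm_num) (hGint r₁ h₁) (hGint r₂ (h₁.trans h₁₂))
    intro u hu
    exact hφmono (mul_le_mul_of_nonneg_right h₁₂ (by linarith [hu.1]))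
  have hGge : ∀ r : ℝ, 0 ≤ r → φ r ≤ G r := by
    intro r hr
    have : φ r = ∫ _ in (1:ℝ)..2, φ r := by simp; ring
    rw [this]
    apply integral_mono_on (by norm_num) intervalIntegrable_const (hGint r hr)
    intro u hu
    exact hφmono (le_mul_of_one_le_right hr hu.1)
  have hGle : ∀ r : ℝ, 0 ≤ r → G r ≤ φ (2 * r) := by
    intro r hr
    have h2 : φ (2*r) = ∫ _ in (1:ℝ)..2, φ (2*r) := by simp; ring
    rw [h2]
    apply integral_mono_on (by norm_num) (hGint r hr) intervalIntegrable_const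
    intro u hu
    exact hφmono (by nlinarith [hu.1, hu.2])
  have hGnonneg : ∀ r : ℝ, 0 ≤ r → 0 ≤ G r := fun r hr => (hφnonneg r).trans (hGge r hr)
  have hG0 : G 0 = 0 := by simp [hGdef, hφ0]
  -- continuity of G on Ioi 0 via the primitive
  set F : ℝ → ℝ := fun t => ∫ s in (0:ℝ)..t, φ s with hFdef
  have hFcont : Continuous F := continuous_primitive hφint 0
  have hGalt : ∀ r : ℝ, r ≠ 0 → G r = r⁻¹ * (F (2*r) - F r) := by
    intro r hr
    have h1 := integral_comp_mul_left (a := (1:ℝ)) (b := 2) φ hr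
    have h2 := integral_add_adjacent_intervals (a := (0:ℝ)) (b := r) (c := 2*r)
      (hφint 0 r) (hφint r (2*r))
    simp only [mul_one] at h1
    rw [hGdef]
    simp only
    rw [h1, smul_eq_mul]
    congr 1
    rw [hFdef]
    simp only
    rw [show r * 2 = 2 * r by ring]
    linarith [h2]
  have hGcontIoi : ContinuousOn G (Ioi (0:ℝ)) := by
    have : ContinuousOn (fun r => r⁻¹ * (F (2*r) - F r)) (Ioi (0:ℝ)) := by
      apply ContinuousOn.mul
      · exact ContinuousOn.inv₀ continuousOn_id (fun r hr => ne_of_gt hr)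
      · exact ((hFcont.comp (continuous_const.mul continuous_id)).sub hFcont).continuousOn
    exact this.congr (fun r hr => hGalt r (ne_of_gt hr))
  -- continuity of G at 0 within Ici 0
  have hGcont0 : Tendsto G (𝓝[Set.Ici 0] 0) (𝓝 0) := by
    rw [Metric.tendsto_nhdsWithin_nhds]
    intro ε hε
    obtain ⟨δ, hδ, hδ'⟩ := hφsmall (ε/2) (by linarith)
    refine ⟨δ/2, by linarith, fun r hr hrd => ?_⟩
    have hr0 : 0 ≤ r := hr
    have : |r| < δ/2 := by simpa [Real.dist_eq] using hrd
    have hrδ : r ≤ δ/2 := le_of_lt (lt_of_abs_lt this)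
    have h1 : G r ≤ ε/2 := (hGle r hr0).trans (hδ' (2*r) (by linarith))
    have h2 : 0 ≤ G r := hGnonneg r hr0
    rw [Real.dist_eq]
    rw [abs_of_nonneg (by simpa using h2)]
    simpa using lt_of_le_of_lt h1 (by linarith)
  -- assemble αhat
  refine ⟨fun r => r + G r, ?_, ?_, by simp [hG0], ?_⟩
  · -- continuity on Ici 0
    intro r hr
    rcases eq_or_lt_of_le (Set.mem_Ici.mp hr : (0:ℝ) ≤ r) with rfl | hpos
    · refine ContinuousWithinAt.add ?_ ?_
      · exact continuousWithinAt_id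
      · rw [ContinuousWithinAt, hG0]
        exact hGcont0
    · have : ContinuousAt (fun r => r + G r) r := by
        apply ContinuousAt.add continuousAt_id
        exact (hGcontIoi.continuousAt (Ioi_mem_nhds hpos))
      exact this.continuousWithinAt
  · -- strict monotonicity
    intro r₁ h₁ r₂ h₂ h₁₂
    exact add_lt_add_of_lt_of_le h₁₂ (hGmono r₁ r₂ h₁ h₁₂.le)
  · -- the ZBF inequality
    intro x hx
    have h1 : -(L x) ≤ ψ x := le_max_left _ _
    have h2 : ψ x ≤ φ (h x) := hφge x hx (h x) le_rfl
    have h3 : φ (h x) ≤ G (h x) := hGge (h x) hx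
    have : -(L x) ≤ h x + G (h x) := by linarith
    simpa [hLdef, ge_iff_le, neg_le] using this
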